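/- Let T ⊆ [ℕ]^∞ be an unbounded set (in particular, any unbounded tower). Then the space T ∪ Fin, regarded as a subspace of the Cantor space P(ℕ), does not satisfy S₁(B_Γ,B_Γ). -/

import Mathlib

open Filter Set

universe u

/-- `[ℕ]^∞`: the family of (characteristic functions of) infinite subsets of `ℕ`. -/
def infSupp : Set (ℕ → Bool) := {x | {n | x n = true}.Infinite}

/-- `Fin`: the family of (characteristic functions of) finite subsets of `ℕ`. -/
def finSupp : Set (ℕ → Bool) := {x | {n | x n = true}.Finite}

/-- `S₁(B_Γ,B_Γ)`: from every sequence of countable Borel γ-covers one can select single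
members `B n` such that every point belongs to all but finitely many of them. -/
def SOneBGammaBGamma (Y : Type u) [TopologicalSpace Y] : Prop :=
  ∀ ℬ : ℕ → Set (Set Y),
    (∀ n, (ℬ n).Countable ∧ (ℬ n).Infinite ∧ (∀ B ∈ ℬ n, @MeasurableSet Y (borel Y) B) ∧
      (∀ B ∈ ℬ n, ¬ (Set.univ : Set Y) ⊆ B) ∧ ∀ y : Y, {B ∈ ℬ n | y ∉ B}.Finite) →
    ∃ B : ℕ → Set Y, (∀ n, B n ∈ ℬ n) ∧ ∀ y : Y, ∀ᶠ n in atTop, y ∈ B n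

namespace Stmt19Aux

variable (T : Set (ℕ → Bool))

/-- the point of `T ∪ Fin` which is the characteristic function of `{m}`. -/
def e (m : ℕ) : ↥(T ∪ finSupp) :=
  ⟨fun k => decide (k = m), Or.inr (by
    apply Set.Finite.subset (Set.finite_singleton m)
    intro k hk
    simp only [Set.mem_setOf_eq, decide_eq_true_eq] at hk
    simp [hk])⟩

lemma e_injective : Function.Injective (e T) := by
  intro a b h
  have : (e T a : ℕ → Bool) b = (e T b : ℕ → Bool) b := by rw [h]
  simp [e] at this
  exact this.symm

/-- `{y | at least n+1 elements of the support of y are ≤ m}`. -/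
def K (n m : ℕ) : Set ↥(T ∪ finSupp) :=
  {y | n + 1 ≤ Nat.count (fun k => (y : ℕ → Bool) k = true) (m + 1)}

def finT : Set ↥(T ∪ finSupp) := {y | {k | (y : ℕ → Bool) k = true}.Finite}

def D (n m : ℕ) : Set ↥(T ∪ finSupp) := (finT T ∪ K T n m) \ {e T m}

lemma K_eq_union (n m : ℕ) :
    K T n m = ⋃ s ∈ {s : Finset ℕ | s.card = n + 1 ∧ ∀ k ∈ s, k ≤ m},
      ⋂ k ∈ s, {y : ↥(T ∪ finSupp) | (y : ℕ → Bool) k = true} := by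
  ext y
  simp only [K, Set.mem_setOf_eq, Set.mem_iUnion, Set.mem_iInter, exists_prop]
  constructor
  · intro h
    rw [Nat.count_eq_card_filter_range] at h
    obtain ⟨t, ht, hcard⟩ := Finset.exists_subset_card_eq h
    refine ⟨t, ⟨hcard, fun k hk => ?_⟩, fun k hk => ?_⟩
    · have := ht hk
      simp only [Finset.mem_filter, Finset.mem_range] at this
      omega
    · have := ht hk
      simp only [Finset.mem_filter] at this
      exact this.2
  · rintro ⟨s, ⟨hcard, hle⟩, hmem⟩
    rw [Nat.count_eq_card_filter_range]
    calc n + 1 = s.card := hcard.symm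
      _ ≤ _ := Finset.card_le_card (by
        intro k hk
        simp only [Finset.mem_filter, Finset.mem_range]
        exact ⟨by have := hle k hk; omega, hmem k hk⟩)

lemma mem_K_iff_nth_le {y : ↥(T ∪ finSupp)} (hy : {k | (y : ℕ → Bool) k = true}.Infinite)
    (n m : ℕ) : y ∈ K T n m ↔ Nat.nth (fun k => (y : ℕ → Bool) k = true) n ≤ m := by
  constructor
  · intro h
    have := Nat.nth_lt_of_lt_count (p := fun k => (y : ℕ → Bool) k = true) (n := m + 1) (k := n)
      (by exact h)
    omega
  · intro h
    have h1 := Nat.count_nth_succ_of_infinite (p := fun k => (y : ℕ → Bool) k = true) hy n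
    have h2 := Nat.count_monotone (fun k => (y : ℕ → Bool) k = true)
      (show Nat.nth (fun k => (y : ℕ → Bool) k = true) n + 1 ≤ m + 1 by omega)
    simp only [K, Set.mem_setOf_eq]
    omega

lemma finSupp_countable : Set.Countable finSupp := by
  have : finSupp ⊆ Set.range (fun s : Finset ℕ => (fun n => decide (n ∈ s) : ℕ → Bool)) := by
    intro x hx
    refine ⟨hx.toFinset, ?_⟩
    funext n
    by_cases h : x n = true
    · simp [Set.Finite.mem_toFinset, h]
      exact (Set.Finite.mem_toFinset (s := {n | x n = true}) hx).2 h
    · simp only [Bool.not_eq_true] at h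
      simp [Set.Finite.mem_toFinset, h]
      exact fun hm => absurd ((Set.Finite.mem_toFinset (s := {n | x n = true}) hx).1 hm) (by simp [h])
  exact (Set.countable_range _).mono this

lemma finT_countable : Set.Countable (finT T) := by
  have : finT T = Subtype.val ⁻¹' finSupp := rfl
  rw [this]
  exact Set.Countable.preimage_of_injOn (finSupp_countable) (Subtype.val_injective.injOn)

lemma e_mem_finT (m : ℕ) : e T m ∈ finT T := by
  apply Set.Finite.subset (Set.finite_singleton m)
  intro k hk
  simp only [e, Set.mem_setOf_eq, decide_eq_true_eq] at hk
  simp [hk]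

lemma D_injective (n : ℕ) : Function.Injective (D T n) := by
  intro a b h
  by_contra hab
  have hea : e T b ∈ D T n a := by
    refine ⟨Or.inl (e_mem_finT T b), ?_⟩
    simp only [Set.mem_singleton_iff]
    exact fun hc => hab (e_injective T hc).symm
  rw [h] at hea
  exact hea.2 rfl

end Stmt19Aux

/-- If `T ⊆ [ℕ]^∞` is unbounded (with respect to eventual domination of increasing
enumerations), then the space `T ∪ Fin ⊆ 2^ℕ` does not satisfy `S₁(B_Γ,B_Γ)`. -/
theorem stmt19 (T : Set (ℕ → Bool)) (hT : T ⊆ infSupp)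
    (hunb : ¬ ∃ g : ℕ → ℕ, ∀ x ∈ T,
      ∀ᶠ n in atTop, Nat.nth (fun k => x k = true) n ≤ g n) :
    ¬ SOneBGammaBGamma ↥(T ∪ finSupp) := by
  intro hS
  letI : MeasurableSpace ↥(T ∪ finSupp) := borel _
  haveI : BorelSpace ↥(T ∪ finSupp) := ⟨rfl⟩
  haveI : MeasurableSingletonClass ↥(T ∪ finSupp) :=
    ⟨fun a => isClosed_singleton.measurableSet⟩
  have hcov : ∀ n : ℕ, (Set.range (Stmt19Aux.D T n)).Countable ∧
      (Set.range (Stmt19Aux.D T n)).Infinite ∧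
      (∀ B ∈ Set.range (Stmt19Aux.D T n),
        @MeasurableSet ↥(T ∪ finSupp) (borel _) B) ∧
      (∀ B ∈ Set.range (Stmt19Aux.D T n), ¬ (Set.univ : Set ↥(T ∪ finSupp)) ⊆ B) ∧
      ∀ y : ↥(T ∪ finSupp), {B ∈ Set.range (Stmt19Aux.D T n) | y ∉ B}.Finite := by
    intro n
    refine ⟨Set.countable_range _,
      Set.infinite_range_of_injective (Stmt19Aux.D_injective T n), ?_, ?_, ?_⟩
    · rintro B ⟨k, rfl⟩
      show MeasurableSet (Stmt19Aux.D T n k)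
      apply MeasurableSet.diff
      · apply MeasurableSet.union
        · exact (Stmt19Aux.finT_countable T).measurableSet
        · rw [Stmt19Aux.K_eq_union]
          refine MeasurableSet.biUnion (Set.to_countable _) (fun s _ => ?_)
          refine MeasurableSet.biInter (s.countable_toSet) (fun j _ => ?_)
          have hc : Continuous (fun y : ↥(T ∪ finSupp) => (y : ℕ → Bool) j) :=
            (continuous_apply j).comp continuous_subtype_val
          exact hc.measurable (measurableSet_singleton true)
      · exact measurableSet_singleton _
    · rintro B ⟨k, rfl⟩ hsub
      exact (hsub (Set.mem_univ (Stmt19Aux.e T k))).2 rfl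
    · intro y
      apply Set.Finite.subset (Set.Finite.image (Stmt19Aux.D T n)
        (s := {k | y ∉ Stmt19Aux.D T n k}) ?_)
      · rintro B ⟨⟨k, rfl⟩, hy⟩
        exact ⟨k, hy, rfl⟩
      · have hsub : {k | y ∉ Stmt19Aux.D T n k} ⊆
            {k | y = Stmt19Aux.e T k} ∪ {k | y ∉ Stmt19Aux.finT T ∪ Stmt19Aux.K T n k} := by
          intro k hk
          simp only [Stmt19Aux.D, Set.mem_diff, Set.mem_singleton_iff, not_and, not_not,
            Set.mem_setOf_eq] at hk ⊢
          by_cases h : y ∈ Stmt19Aux.finT T ∪ Stmt19Aux.K T n k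
          · exact Or.inl (hk h)
          · exact Or.inr h
        apply Set.Finite.subset _ hsub
        apply Set.Finite.union
        · apply Set.Subsingleton.finite
          intro a ha b hb
          exact Stmt19Aux.e_injective T (ha.symm.trans hb)
        · rcases y.2 with hyT | hyfin
          · have hinf : {j | (y : ℕ → Bool) j = true}.Infinite := hT hyT
            apply Set.Finite.subset
              (Set.finite_Iio (Nat.nth (fun j => (y : ℕ → Bool) j = true) n))
            intro k hk
            simp only [Set.mem_setOf_eq, Set.mem_union, not_or] at hk
            have := hk.2
            rw [Stmt19Aux.mem_K_iff_nth_le T hinf n k] at this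
            simpa using Nat.lt_of_not_le this
          · apply Set.Finite.subset Set.finite_empty
            intro k hk
            simp only [Set.mem_setOf_eq, Set.mem_union, not_or] at hk
            exact hk.1 hyfin
  obtain ⟨B, hBmem, hBev⟩ := hS (fun n => Set.range (Stmt19Aux.D T n)) hcov
  choose m hm using hBmem
  apply hunb
  refine ⟨m, fun x hx => ?_⟩
  have hxinf : {k | x k = true}.Infinite := hT hx
  have := hBev ⟨x, Or.inl hx⟩
  filter_upwards [this] with n hn
  rw [← hm n] at hn
  obtain ⟨hC, -⟩ := hn
  cases hC with
  | inl hfin => exact absurd hfin hxinf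
  | inr hK => exact (Stmt19Aux.mem_K_iff_nth_le T hxinf n (m n)).1 hK
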